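/- Let ζ ∈ k be a primitive n-th root of unity and let m, t be positive divisors of n with n ∤ mt; set N = n/gcd(n, mt). Let A = k[u]/(u^n − 1). Then there exists an H_n(ζ,m,t)-module-algebra structure (σ, δ) on A with σ(u) = ζ·u and δ ≠ 0 if and only if gcd(t, n/m) = 1. Moreover, whenever such a structure exists, necessarily δ(u) = γ·u^{t+1} for some nonzero γ ∈ k. -/

import Mathlib

section Aux

variable {k A : Type*} [Field k] [CommRing A] [Algebra k A]

lemma aux_sigpow (ζ : k) (u : A) (σ : A ≃ₐ[k] A) (hσu : σ u = ζ • u) :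
    ∀ s : ℕ, (σ ^ s) u = ζ ^ s • u := by
  intro s
  induction s with
  | zero => simp
  | succ s ih =>
      rw [pow_succ', AlgEquiv.mul_apply, ih, map_smul, hσu, smul_smul, ← pow_succ]

lemma aux_DL (m t : ℕ) (ζ γ : k) (u : A) (σ : A ≃ₐ[k] A) (δ : A →ₗ[k] A)
    (hσu : σ u = ζ • u) (hδ1 : δ 1 = 0)
    (hLeib : ∀ a c : A, δ (a * c) = (σ ^ m) a * δ c + δ a * c)
    (hδu : δ u = γ • u ^ (t + 1)) :
    ∀ j : ℕ, δ (u ^ j) = (γ * ∑ s ∈ Finset.range j, (ζ ^ m) ^ s) • u ^ (j + t) := by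
  intro j
  induction j with
  | zero => simp [hδ1]
  | succ j ih =>
      have e1 : u ^ j * u ^ (t + 1) = u ^ (j + 1 + t) := by
        rw [← pow_add]; congr 1; omega
      have e2 : u ^ (j + t) * u = u ^ (j + 1 + t) := by
        rw [← pow_succ]; congr 1; omega
      rw [pow_succ, hLeib, map_pow, aux_sigpow ζ u σ hσu m, hδu, ih,
        smul_pow, Finset.sum_range_succ]
      rw [smul_mul_assoc, mul_smul_comm, smul_smul, smul_mul_assoc, e1, e2, ← add_smul]
      congr 1
      ring

lemma aux_DLr (m t : ℕ) (ζ γ : k) (u : A) (σ : A ≃ₐ[k] A) (δ : A →ₗ[k] A)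
    (hσu : σ u = ζ • u) (hδ1 : δ 1 = 0)
    (hLeib : ∀ a c : A, δ (a * c) = (σ ^ m) a * δ c + δ a * c)
    (hδu : δ u = γ • u ^ (t + 1)) :
    ∀ (r j : ℕ), (δ ^ r) (u ^ j) =
      (γ ^ r * ∏ s ∈ Finset.range r, ∑ w ∈ Finset.range (j + s * t), (ζ ^ m) ^ w)
        • u ^ (j + r * t) := by
  intro r
  induction r with
  | zero => intro j; simp
  | succ r ih =>
      intro j
      have e : j + r * t + t = j + (r + 1) * t := by ring
      rw [pow_succ', Module.End.mul_apply, ih, map_smul,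
        aux_DL m t ζ γ u σ δ hσu hδ1 hLeib hδu, Finset.prod_range_succ, smul_smul, e]
      congr 1
      ring

end Aux

/-- An `H_n(ζ,m,t)`-module-algebra structure on `A`, given by the action `σ` of the
grouplike generator `y` and the action `δ` of the `(y^m,1)`-skew primitive `x`;
here `N = n / gcd(n, mt)` is the nilpotency order of `x`. -/
def IsHAction {k A : Type*} [Field k] [CommRing A] [Algebra k A]
    (n m t N : ℕ) (ζ : k) (σ : A ≃ₐ[k] A) (δ : A →ₗ[k] A) : Prop :=
  σ ^ n = 1 ∧ δ 1 = 0 ∧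
  (∀ a c : A, δ (a * c) = (σ ^ m) a * δ c + δ a * c) ∧
  δ ^ N = 0 ∧
  σ.toLinearMap ∘ₗ δ = ζ ^ t • (δ ∘ₗ σ.toLinearMap)

/-- On `A = k[u]/(uⁿ - 1)`, an `H_n(ζ,m,t)`-module-algebra structure `(σ, δ)` with
`σ(u) = ζ·u` and `δ ≠ 0` exists iff `gcd(t, n/m) = 1`; moreover any such `δ` satisfies
`δ(u) = γ·u^(t+1)` for some nonzero `γ`. -/
theorem stmt_9 (k : Type*) [Field k] [IsAlgClosed k] [CharZero k]
    (n : ℕ) (hn : 0 < n) (ζ : k) (hζ : IsPrimitiveRoot ζ n)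
    (m t : ℕ) (hm0 : 0 < m) (ht0 : 0 < t) (hmn : m ∣ n) (htn : t ∣ n)
    (hnmt : ¬ n ∣ m * t)
    (A : Type*) [CommRing A] [Algebra k A]
    (u : A) (b : Module.Basis (Fin n) k A) (hb : ∀ i : Fin n, b i = u ^ (i : ℕ))
    (hu : u ^ n = 1) :
    ((∃ (σ : A ≃ₐ[k] A) (δ : A →ₗ[k] A),
        IsHAction n m t (n / Nat.gcd n (m * t)) ζ σ δ ∧ σ u = ζ • u ∧ δ ≠ 0)
      ↔ Nat.gcd t (n / m) = 1) ∧
    (∀ (σ : A ≃ₐ[k] A) (δ : A →ₗ[k] A),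
        IsHAction n m t (n / Nat.gcd n (m * t)) ζ σ δ → σ u = ζ • u → δ ≠ 0 →
        ∃ γ : k, γ ≠ 0 ∧ δ u = γ • u ^ (t + 1)) := by
  classical
  have hζn : ζ ^ n = 1 := hζ.pow_eq_one
  have hζ0 : ζ ≠ 0 := by
    intro h
    rw [h, zero_pow hn.ne'] at hζn
    exact one_ne_zero hζn.symm
  have hmlt : m < n := lt_of_le_of_ne (Nat.le_of_dvd hn hmn)
    (fun h => hnmt (by rw [h]; exact dvd_mul_right n t))
  set d := n / m with hdset
  have hdd : n = m * d := (Nat.mul_div_cancel' hmn).symm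
  have hd0 : 0 < d := Nat.div_pos (Nat.le_of_dvd hn hmn) hm0
  have hq1 : ζ ^ m ≠ 1 := hζ.pow_ne_one_of_pos_of_lt hm0.ne' hmlt
  -- geometric sum facts
  have hCzero : ∀ w : ℕ, (∑ s ∈ Finset.range w, (ζ ^ m) ^ s) = 0 ↔ d ∣ w := by
    intro w
    have hgeo := geom_sum_mul (ζ ^ m) w
    have hsub : ζ ^ m - 1 ≠ 0 := sub_ne_zero.mpr hq1
    have hpow : (ζ ^ m) ^ w = 1 ↔ d ∣ w := by
      rw [← pow_mul, hζ.pow_eq_one_iff_dvd, hdd]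
      exact Nat.mul_dvd_mul_iff_left hm0
    constructor
    · intro h
      rw [h, zero_mul] at hgeo
      exact hpow.mp (by linear_combination -hgeo)
    · intro h
      rw [hpow.mpr h, sub_self] at hgeo
      exact (mul_eq_zero.mp hgeo).resolve_right hsub
  have hCadd : ∀ a c : ℕ, (∑ s ∈ Finset.range (a + c), (ζ ^ m) ^ s)
      = (∑ s ∈ Finset.range a, (ζ ^ m) ^ s)
        + (ζ ^ m) ^ a * ∑ s ∈ Finset.range c, (ζ ^ m) ^ s := by
    intro a c
    rw [Finset.sum_range_add, Finset.mul_sum]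
    simp [pow_add]
  have hCn : (∑ s ∈ Finset.range n, (ζ ^ m) ^ s) = 0 :=
    (hCzero n).mpr ⟨m, by rw [hdd]; ring⟩
  have hCper : ∀ j : ℕ, (∑ s ∈ Finset.range (j % n), (ζ ^ m) ^ s)
      = ∑ s ∈ Finset.range j, (ζ ^ m) ^ s := by
    have key : ∀ (s j : ℕ), (∑ w ∈ Finset.range (j + s * n), (ζ ^ m) ^ w)
        = ∑ w ∈ Finset.range j, (ζ ^ m) ^ w := by
      intro s
      induction s with
      | zero => intro j; simp
      | succ s ih =>
          intro j
          rw [show j + (s + 1) * n = (j + s * n) + n by ring, hCadd, hCn, mul_zero,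
            add_zero, ih]
    intro j
    conv_rhs => rw [show j = j % n + (j / n) * n by rw [mul_comm]; exact (Nat.mod_add_div j n).symm]
    rw [key]
  -- powers of u
  have hupow : ∀ j : ℕ, u ^ j = u ^ (j % n) := by
    intro j
    conv_lhs => rw [show j = j % n + n * (j / n) from (Nat.mod_add_div j n).symm]
    rw [pow_add, pow_mul, hu, one_pow, mul_one]
  have hζpow : ∀ j : ℕ, ζ ^ j = ζ ^ (j % n) := by
    intro j
    conv_lhs => rw [show j = j % n + n * (j / n) from (Nat.mod_add_div j n).symm]
    rw [pow_add, pow_mul, hζn, one_pow, mul_one]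
  have hbem : ∀ j : ℕ, b ⟨j % n, Nat.mod_lt j hn⟩ = u ^ j := by
    intro j
    rw [hb]
    exact (hupow j).symm
  have hune : ∀ j : ℕ, u ^ j ≠ 0 := by
    intro j
    rw [← hbem j]
    exact b.ne_zero _
  have hsmul0 : ∀ (c : k) (j : ℕ), c • u ^ j = 0 → c = 0 := by
    intro c j h
    rw [← hbem j] at h
    have := congrArg (fun x => b.repr x ⟨j % n, Nat.mod_lt j hn⟩) h
    simpa using this
  -- the "moreover" statement, proved once
  have keyγ : ∀ (σ : A ≃ₐ[k] A) (δ : A →ₗ[k] A),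
      IsHAction n m t (n / Nat.gcd n (m * t)) ζ σ δ → σ u = ζ • u → δ ≠ 0 →
      ∃ γ : k, γ ≠ 0 ∧ δ u = γ • u ^ (t + 1) := by
    intro σ δ hact hσu hδne
    obtain ⟨hσn, hδ1, hLeib, hδN, hcomm⟩ := hact
    have hσb : ∀ l : Fin n, σ (b l) = ζ ^ (l : ℕ) • b l := by
      intro l
      rw [hb, map_pow, hσu, smul_pow, ← hb]
    have hcu : σ (δ u) = ζ ^ (t + 1) • δ u := by
      have h := LinearMap.congr_fun hcomm u
      simp only [LinearMap.comp_apply, LinearMap.smul_apply, AlgEquiv.toLinearMap_apply] at h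
      rw [hσu, map_smul] at h
      rw [h, smul_smul, ← pow_succ]
    set f := b.repr (δ u) with hf
    set i0 : Fin n := ⟨(t + 1) % n, Nat.mod_lt (t + 1) hn⟩ with hi0
    have hbi0 : b i0 = u ^ (t + 1) := hbem (t + 1)
    have hsum : δ u = ∑ l : Fin n, f l • b l := (b.sum_repr (δ u)).symm
    have hfz : ∀ l : Fin n, l ≠ i0 → f l = 0 := by
      intro l hne
      have h1 : σ (δ u) = ∑ l : Fin n, (ζ ^ (l : ℕ) * f l) • b l := by
        rw [hsum, map_sum]
        refine Finset.sum_congr rfl fun l _ => ?_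
        rw [map_smul, hσb, smul_smul, mul_comm]
      have h2 : ζ ^ (t + 1) • δ u = ∑ l : Fin n, (ζ ^ (t + 1) * f l) • b l := by
        rw [hsum, Finset.smul_sum]
        refine Finset.sum_congr rfl fun l _ => ?_
        rw [smul_smul]
      have hAB : (∑ l : Fin n, (ζ ^ (l : ℕ) * f l) • b l)
          = ∑ l : Fin n, (ζ ^ (t + 1) * f l) • b l := h1.symm.trans (hcu.trans h2)
      have h3 : ζ ^ (l : ℕ) * f l = ζ ^ (t + 1) * f l := by
        calc ζ ^ (l : ℕ) * f l
            = b.repr (∑ l : Fin n, (ζ ^ (l : ℕ) * f l) • b l) l :=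
              (congrFun (b.repr_sum_self fun l => ζ ^ (l : ℕ) * f l) l).symm
          _ = b.repr (∑ l : Fin n, (ζ ^ (t + 1) * f l) • b l) l := by rw [hAB]
          _ = ζ ^ (t + 1) * f l := congrFun (b.repr_sum_self fun l => ζ ^ (t + 1) * f l) l
      by_contra hfl
      apply hne
      have hζeq : ζ ^ (l : ℕ) = ζ ^ (t + 1) := mul_right_cancel₀ hfl h3
      have : (l : ℕ) = (t + 1) % n :=
        hζ.pow_inj l.isLt (Nat.mod_lt (t + 1) hn) (by rw [hζeq, hζpow])
      exact Fin.ext this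
    have hδu : δ u = f i0 • u ^ (t + 1) := by
      rw [hsum, Finset.sum_eq_single i0 (fun l _ hne => by rw [hfz l hne, zero_smul])
        (fun h => absurd (Finset.mem_univ i0) h), hbi0]
    refine ⟨f i0, ?_, hδu⟩
    intro hγ0
    apply hδne
    have hδu0 : δ u = (0 : k) • u ^ (t + 1) := by rw [hδu, hγ0]
    have hall := aux_DL m t ζ 0 u σ δ hσu hδ1 hLeib hδu0
    refine b.ext fun l => ?_
    rw [hb, hall, zero_mul, zero_smul, LinearMap.zero_apply]
  -- existence implies gcd = 1
  have keygcd : ∀ (σ : A ≃ₐ[k] A) (δ : A →ₗ[k] A),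
      IsHAction n m t (n / Nat.gcd n (m * t)) ζ σ δ → σ u = ζ • u → δ ≠ 0 →
      Nat.gcd t d = 1 := by
    intro σ δ hact hσu hδne
    obtain ⟨γ, hγ, hδu⟩ := keyγ σ δ hact hσu hδne
    obtain ⟨hσn, hδ1, hLeib, hδN, hcomm⟩ := hact
    have h0 := aux_DLr m t ζ γ u σ δ hσu hδ1 hLeib hδu (n / Nat.gcd n (m * t)) 1
    rw [hδN, LinearMap.zero_apply] at h0
    have hs0 := hsmul0 _ _ h0.symm
    rcases mul_eq_zero.mp hs0 with h | h
    · exact absurd h (pow_ne_zero _ hγ)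
    obtain ⟨s, hs, hcs⟩ := Finset.prod_eq_zero_iff.mp h
    have hdvd : d ∣ 1 + s * t := (hCzero _).mp hcs
    have hg1 : Nat.gcd t d ∣ 1 := by
      have h1 : Nat.gcd t d ∣ 1 + s * t := dvd_trans (Nat.gcd_dvd_right t d) hdvd
      have h2 : Nat.gcd t d ∣ s * t := Dvd.dvd.mul_left (Nat.gcd_dvd_left t d) s
      simpa using Nat.dvd_sub h1 h2
    exact Nat.dvd_one.mp hg1
  refine ⟨⟨?_, ?_⟩, fun σ δ hact hσu hδne => keyγ σ δ hact hσu hδne⟩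
  · rintro ⟨σ, δ, hact, hσu, hδne⟩
    exact keygcd σ δ hact hσu hδne
  · intro hcop
    have hgcdn : Nat.gcd n (m * t) = m := by
      rw [hdd, Nat.gcd_mul_left, Nat.gcd_comm d t, hcop, mul_one]
    have hNd : n / Nat.gcd n (m * t) = d := by
      rw [hgcdn]
    -- construct σ
    set S : A →ₗ[k] A := b.constr k (fun i => ζ ^ (i : ℕ) • b i) with hS
    set T : A →ₗ[k] A := b.constr k (fun i => (ζ ^ (i : ℕ))⁻¹ • b i) with hT
    have hST : S.comp T = LinearMap.id := by
      refine b.ext fun i => ?_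
      rw [LinearMap.comp_apply, LinearMap.id_apply, hT, Module.Basis.constr_basis, map_smul, hS,
        Module.Basis.constr_basis, smul_smul, inv_mul_cancel₀ (pow_ne_zero _ hζ0), one_smul]
    have hTS : T.comp S = LinearMap.id := by
      refine b.ext fun i => ?_
      rw [LinearMap.comp_apply, LinearMap.id_apply, hS, Module.Basis.constr_basis, map_smul, hT,
        Module.Basis.constr_basis, smul_smul, mul_inv_cancel₀ (pow_ne_zero _ hζ0), one_smul]
    set σLE : A ≃ₗ[k] A := LinearEquiv.ofLinear S T hST hTS with hσLE
    have hσLEapp : ∀ a : A, σLE a = S a := fun a => rfl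
    have hSu : ∀ j : ℕ, S (u ^ j) = ζ ^ j • u ^ j := by
      intro j
      conv_lhs => rw [← hbem j]
      rw [hS, Module.Basis.constr_basis]
      show ζ ^ (j % n) • b ⟨j % n, Nat.mod_lt j hn⟩ = ζ ^ j • u ^ j
      rw [hbem j, ← hζpow j]
    have hone : σLE 1 = 1 := by
      rw [hσLEapp]
      have h1 : (1 : A) = u ^ 0 := (pow_zero u).symm
      rw [h1, hSu 0, pow_zero, one_smul]
    have hmulS : ∀ x y : A, S (x * y) = S x * S y := by
      have key : (LinearMap.mul k A).compr₂ S = (LinearMap.mul k A).compl₁₂ S S := by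
        refine b.ext fun i => b.ext fun j => ?_
        simp only [LinearMap.compr₂_apply, LinearMap.compl₁₂_apply, LinearMap.mul_apply']
        rw [hb i, hb j, ← pow_add, hSu, hSu, hSu]
        rw [smul_mul_assoc, mul_smul_comm, smul_smul, ← pow_add, ← pow_add]
      intro x y
      have := LinearMap.congr_fun (LinearMap.congr_fun key x) y
      simpa only [LinearMap.compr₂_apply, LinearMap.compl₁₂_apply, LinearMap.mul_apply']
        using this
    set σ : A ≃ₐ[k] A := AlgEquiv.ofLinearEquiv σLE hone hmulS with hσdef
    have hσapp : ∀ a : A, σ a = S a := fun a => rfl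
    have hσu : σ u = ζ • u := by
      rw [hσapp]
      have := hSu 1
      rwa [pow_one, pow_one] at this
    have hσmu : (σ ^ m) u = ζ ^ m • u := aux_sigpow ζ u σ hσu m
    have hσn : σ ^ n = 1 := by
      have hσpowu : ∀ j : ℕ, (σ ^ n) (u ^ j) = u ^ j := by
        intro j
        rw [map_pow, aux_sigpow ζ u σ hσu n, hζn, one_smul]
      have hlin : (σ ^ n : A ≃ₐ[k] A).toLinearMap = (1 : A ≃ₐ[k] A).toLinearMap := by
        refine b.ext fun i => ?_
        rw [AlgEquiv.toLinearMap_apply, AlgEquiv.toLinearMap_apply, hb, hσpowu,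
          AlgEquiv.one_apply]
      exact AlgEquiv.ext fun a => by simpa using LinearMap.congr_fun hlin a
    -- construct δ
    set δ : A →ₗ[k] A :=
      b.constr k (fun i => (∑ s ∈ Finset.range (i : ℕ), (ζ ^ m) ^ s) • u ^ ((i : ℕ) + t))
      with hδdef
    have hδu' : ∀ j : ℕ,
        δ (u ^ j) = (∑ s ∈ Finset.range j, (ζ ^ m) ^ s) • u ^ (j + t) := by
      intro j
      conv_lhs => rw [← hbem j]
      rw [hδdef, Module.Basis.constr_basis]
      show (∑ s ∈ Finset.range (j % n), (ζ ^ m) ^ s) • u ^ (j % n + t) = _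
      rw [hCper j]
      congr 1
      rw [hupow (j % n + t), hupow (j + t), Nat.mod_add_mod]
    have hδ1 : δ 1 = 0 := by
      have := hδu' 0
      simpa using this
    have hδuu : δ u = u ^ (1 + t) := by
      have := hδu' 1
      simpa using this
    have hδub : δ u = (1 : k) • u ^ (t + 1) := by
      rw [one_smul, hδuu]
      congr 1
      omega
    have hδne : δ ≠ 0 := by
      intro h
      apply hune (1 + t)
      rw [← hδuu, h, LinearMap.zero_apply]
    have hLeib : ∀ a c : A, δ (a * c) = (σ ^ m) a * δ c + δ a * c := by
      have key : (LinearMap.mul k A).compr₂ δ =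
          (LinearMap.mul k A).compl₁₂ (σ ^ m : A ≃ₐ[k] A).toLinearMap δ +
          (LinearMap.mul k A).compl₁₂ δ LinearMap.id := by
        refine b.ext fun i => b.ext fun j => ?_
        simp only [LinearMap.compr₂_apply, LinearMap.add_apply, LinearMap.compl₁₂_apply,
          LinearMap.mul_apply', LinearMap.id_apply, AlgEquiv.toLinearMap_apply]
        rw [hb i, hb j, ← pow_add, hδu', hδu', hδu']
        rw [map_pow, hσmu, smul_pow]
        rw [smul_mul_assoc, mul_smul_comm, smul_smul, smul_mul_assoc, ← pow_add, ← pow_add]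
        rw [show (i : ℕ) + ((j : ℕ) + t) = (i : ℕ) + (j : ℕ) + t by omega,
          show (i : ℕ) + t + (j : ℕ) = (i : ℕ) + (j : ℕ) + t by omega]
        rw [hCadd, add_smul, add_comm]
      intro x y
      have := LinearMap.congr_fun (LinearMap.congr_fun key x) y
      simpa only [LinearMap.compr₂_apply, LinearMap.add_apply, LinearMap.compl₁₂_apply,
        LinearMap.mul_apply', LinearMap.id_apply, AlgEquiv.toLinearMap_apply] using this
    have hcomm : σ.toLinearMap ∘ₗ δ = ζ ^ t • (δ ∘ₗ σ.toLinearMap) := by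
      have hc1 : ∀ j : ℕ, σ (δ (u ^ j)) = ζ ^ t • δ (σ (u ^ j)) := by
        intro j
        conv_rhs => rw [map_pow, hσu, smul_pow, map_smul, hδu' j]
        conv_lhs => rw [hδu' j, map_smul, map_pow, hσu, smul_pow]
        rw [smul_smul, smul_smul, smul_smul]
        congr 1
        rw [pow_add]
        ring
      refine b.ext fun i => ?_
      simp only [LinearMap.comp_apply, LinearMap.smul_apply, AlgEquiv.toLinearMap_apply, hb]
      exact hc1 i
    have hfind : ∀ i : ℕ, ∃ r : ℕ, r < d ∧ d ∣ (i + r * t) := by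
      intro i
      haveI : NeZero d := ⟨hd0.ne'⟩
      have htu : IsUnit (t : ZMod d) := (ZMod.isUnit_iff_coprime t d).mpr hcop
      refine ⟨(-(i : ZMod d) * (t : ZMod d)⁻¹).val, ZMod.val_lt _, ?_⟩
      have hz : ((i + (-(i : ZMod d) * (t : ZMod d)⁻¹).val * t : ℕ) : ZMod d) = 0 := by
        push_cast
        rw [ZMod.natCast_val, ZMod.cast_id, mul_assoc, ZMod.inv_mul_of_unit _ htu, mul_one]
        ring
      exact (ZMod.natCast_eq_zero_iff _ _).mp hz
    have hδNd : δ ^ d = 0 := by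
      refine b.ext fun i => ?_
      rw [hb, aux_DLr m t ζ 1 u σ δ hσu hδ1 hLeib hδub, LinearMap.zero_apply]
      obtain ⟨r, hrd, hdvd⟩ := hfind (i : ℕ)
      rw [Finset.prod_eq_zero (Finset.mem_range.mpr hrd) ((hCzero _).mpr hdvd)]
      simp
    have hδN : δ ^ (n / Nat.gcd n (m * t)) = 0 := by
      rw [hNd]
      exact hδNd
    exact ⟨σ, δ, ⟨hσn, hδ1, hLeib, hδN, hcomm⟩, hσu, hδne⟩
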